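/- For every rational number q ≥ 1 there exists a loopless digraph D with χ⃗*(D) = q; that is, the star dichromatic number attains every rational value q ≥ 1. -/

import Mathlib

open Finset

variable {V : Type*}

/-- `v :: l` forms a directed cycle of the digraph with arc relation `E`:
the vertices are pairwise distinct and each one has an arc to the next, cyclically. -/
def IsDicycle (E : V → V → Prop) (v : V) (l : List V) : Prop :=
  (v :: l).Nodup ∧ List.Chain E v (l ++ [v])

/-- The vertex set `A` induces an acyclic subdigraph of the digraph `E`:
no directed cycle of `E` has all of its vertices in `A`. -/
def AcyclicOn (E : V → V → Prop) (A : Set V) : Prop :=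
  ∀ v l, IsDicycle E v l → ¬ (∀ x ∈ v :: l, x ∈ A)

/-- The open arc of length 1 in `ℝ/pℤ` starting at (the image of) `a`. -/
def unitArc (p a : ℝ) : Set (AddCircle p) :=
  (fun x : ℝ => (x : AddCircle p)) '' Set.Ioo a (a + 1)

/-- An acyclic `p`-colouring of the digraph `E` : the preimage of every open arc
of length 1 induces an acyclic subdigraph. -/
def IsAcyclicColouring (E : V → V → Prop) (p : ℝ) (c : V → AddCircle p) : Prop :=
  ∀ a : ℝ, AcyclicOn E (c ⁻¹' unitArc p a)

/-- The star dichromatic number of a digraph. -/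
noncomputable def starDichromatic (E : V → V → Prop) : ℝ :=
  sInf {p : ℝ | 1 ≤ p ∧ ∃ c : V → AddCircle p, IsAcyclicColouring E p c}

/-- A weak circular `p`-colouring in the sense of Bokal et al. -/
def IsWeakCircularColouring (E : V → V → Prop) (p : ℝ) (c : V → AddCircle p) : Prop :=
  (∀ u w, E u w → c u = c w ∨
    ∃ r : ℝ, r ∈ Set.Ico (0 : ℝ) p ∧ (r : AddCircle p) = c w - c u ∧ 1 ≤ r) ∧
  ∀ t : AddCircle p, AcyclicOn E (c ⁻¹' {t})

/-- The circular dichromatic number of a digraph. -/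
noncomputable def circularDichromatic (E : V → V → Prop) : ℝ :=
  sInf {p : ℝ | 1 ≤ p ∧ ∃ c : V → AddCircle p, IsWeakCircularColouring E p c}

/-- The fractional dichromatic number: the optimal value of the covering linear
program over the acyclic vertex subsets. -/
noncomputable def fracDichromatic [Fintype V] [DecidableEq V] (E : V → V → Prop) : ℝ :=
  sInf {r : ℝ | ∃ x : Finset V → ℝ, (∀ A, 0 ≤ x A) ∧
    (∀ A : Finset V, x A ≠ 0 → AcyclicOn E ↑A) ∧
    (∀ v : V, 1 ≤ ∑ A ∈ Finset.univ.filter (fun A : Finset V => v ∈ A), x A) ∧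
    r = ∑ A : Finset V, x A}

/-- The cyclic interval `{i, i+1, ..., i+d-1}` in `ℤ/kℤ`. -/
def cycInterval (k : ℕ) (i : ZMod k) (d : ℕ) : Set (ZMod k) :=
  {j : ZMod k | ∃ t : ℕ, t < d ∧ j = i + (t : ZMod k)}

/-- An acyclic `(k,d)`-colouring of the digraph `E`. -/
def IsAcyclicKDColouring (E : V → V → Prop) (k d : ℕ) (c : V → ZMod k) : Prop :=
  ∀ i : ZMod k, AcyclicOn E (c ⁻¹' cycInterval k i d)

/-- The dichromatic number: the least `k` such that the vertex set can be partitioned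
into `k` classes each inducing an acyclic subdigraph. -/
noncomputable def dichromatic (E : V → V → Prop) : ℕ :=
  sInf {k : ℕ | ∃ c : V → Fin k, ∀ i : Fin k, AcyclicOn E (c ⁻¹' {i})}

/-- `v :: l` forms a cycle of the simple graph `G` (of length at least 3). -/
def IsGraphCycle (G : SimpleGraph V) (v : V) (l : List V) : Prop :=
  3 ≤ (v :: l).length ∧ (v :: l).Nodup ∧ List.Chain G.Adj v (l ++ [v])

/-- The vertex set `A` induces a forest (acyclic subgraph) in the simple graph `G`. -/
def ForestOn (G : SimpleGraph V) (A : Set V) : Prop :=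
  ∀ v l, IsGraphCycle G v l → ¬ (∀ x ∈ v :: l, x ∈ A)

/-- A `(k,d)`-tree-colouring of a graph. -/
def IsTreeColouring (G : SimpleGraph V) (k d : ℕ) (c : V → ZMod k) : Prop :=
  ∀ i : ZMod k, ForestOn G (c ⁻¹' cycInterval k i d)

/-- The circular vertex arboricity of a graph. -/
noncomputable def circularVertexArboricity (G : SimpleGraph V) : ℝ :=
  sInf {r : ℝ | ∃ k d : ℕ, 1 ≤ d ∧ d ≤ k ∧
    (∃ c : V → ZMod k, IsTreeColouring G k d c) ∧ r = (k : ℝ) / d}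

/-- `E` is an orientation of the simple graph `G`: for each edge exactly one of the
two possible arcs is present, and there are no other arcs. -/
def IsOrientation (G : SimpleGraph V) (E : V → V → Prop) : Prop :=
  ∀ u w, ((E u w ∨ E w u) ↔ G.Adj u w) ∧ ¬ (E u w ∧ E w u)

/-- The star dichromatic number of a graph: the maximum over all orientations. -/
noncomputable def starDichromaticGraph (G : SimpleGraph V) : ℝ :=
  sSup {r : ℝ | ∃ E : V → V → Prop, IsOrientation G E ∧ r = starDichromatic E}

/-- The fractional dichromatic number of a graph: the maximum over all orientations. -/
noncomputable def fracDichromaticGraph [Fintype V] [DecidableEq V] (G : SimpleGraph V) : ℝ :=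
  sSup {r : ℝ | ∃ E : V → V → Prop, IsOrientation G E ∧ r = fracDichromatic E}

/-- The fractional chromatic number of a graph: the optimal value of the covering
linear program over the independent vertex subsets. -/
noncomputable def fractionalChromatic [Fintype V] [DecidableEq V] (G : SimpleGraph V) : ℝ :=
  sInf {r : ℝ | ∃ x : Finset V → ℝ, (∀ A, 0 ≤ x A) ∧
    (∀ A : Finset V, x A ≠ 0 → ∀ u ∈ A, ∀ w ∈ A, ¬ G.Adj u w) ∧
    (∀ v : V, 1 ≤ ∑ A ∈ Finset.univ.filter (fun A : Finset V => v ∈ A), x A) ∧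
    r = ∑ A : Finset V, x A}

/-- A `(k,d)`-colouring of a graph in the sense of Vince: colours of adjacent vertices
have circular `k`-distance at least `d`. -/
def IsVinceColouring (G : SimpleGraph V) (k d : ℕ) (c : V → ZMod k) : Prop :=
  ∀ u w, G.Adj u w → d ≤ (c u - c w).val ∧ d ≤ (c w - c u).val

/-- Vince's star (circular) chromatic number of a graph. -/
noncomputable def starChromatic (G : SimpleGraph V) : ℝ :=
  sInf {r : ℝ | ∃ k d : ℕ, 1 ≤ d ∧ d ≤ k ∧
    (∃ c : V → ZMod k, IsVinceColouring G k d c) ∧ r = (k : ℝ) / d}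

/-- The circulant digraph `C⃗(k,d)` on `ℤ/kℤ`: each vertex `i` has the outgoing arcs
`(i, i+d), (i, i+d+1), …, (i, i+k-1)`. -/
def circulantDigraph (k d : ℕ) : ZMod k → ZMod k → Prop :=
  fun i j => ∃ t : ℕ, d ≤ t ∧ t < k ∧ j = i + (t : ZMod k)

/-- The directed cycle `C⃗_n` on `ℤ/nℤ`. -/
def dirCycle (n : ℕ) : ZMod n → ZMod n → Prop :=
  fun i j => j = i + 1

/-- The digraph `D^s` obtained from `D` by adding a dominating source `none`. -/
def addSource (E : V → V → Prop) : Option V → Option V → Prop :=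
  fun a b => match a, b with
  | none, some _ => True
  | some u, some w => E u w
  | _, none => False

/-- The wheel graph `W_k`: a cycle on `ℤ/kℤ` together with a hub `none` adjacent to
every cycle vertex. -/
def wheelGraph (k : ℕ) : SimpleGraph (Option (ZMod k)) :=
  SimpleGraph.fromRel (fun a b => match a, b with
    | none, some _ => True
    | some i, some j => j = i + 1
    | _, none => False)
/-- the star dichromatic number attains every rational `q ≥ 1`. -/

/- ### Auxiliary lemmas for `stmt10` -/

private lemma chainDesc10 {α : Type*} (E : α → α → Prop) (b : ℕ → α) (x : α) :
    ∀ d, (∀ i < d, E (b (i+1)) (b i)) → E (b 0) x →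
      List.Chain E (b d) ((List.range d).reverse.map b ++ [x]) := by
  intro d
  induction d with
  | zero => intro _ hx; simpa using List.Chain.cons hx List.Chain.nil
  | succ d ih =>
    intro hstep hx
    rw [List.range_succ, List.reverse_append]
    simpa using List.Chain.cons (hstep d (by omega))
      (ih (fun i hi => hstep i (by omega)) hx)

private lemma acyclicOn_of_potential10 {α : Type*} (E : α → α → Prop) (A : Set α) (φ : α → ℤ)
    (h : ∀ u w, u ∈ A → w ∈ A → E u w → φ w < φ u) : AcyclicOn E A := by
  intro v l hcyc hmem
  have hv : v ∈ A := hmem v (by simp)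
  have H : ∀ (L : List α) (a : α), List.Chain E a (L ++ [v]) → a ∈ A →
      (∀ x ∈ L, x ∈ A) → φ v < φ a := by
    intro L
    induction L with
    | nil =>
      intro a hch ha _
      rw [List.nil_append] at hch
      change List.IsChain E (a :: _) at hch
      rw [List.chain_cons] at hch
      exact h a v ha hv hch.1
    | cons c L ih =>
      intro a hch ha hmem'
      rw [List.cons_append] at hch
      change List.IsChain E (a :: _) at hch
      rw [List.chain_cons] at hch
      have hc : c ∈ A := hmem' c (by simp)
      exact lt_trans (ih c hch.2 hc (fun x hx => hmem' x (by simp [hx]))) (h a c ha hc hch.1)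
  exact lt_irrefl _ (H l v hcyc.2 hv (fun x hx => hmem x (by simp [hx])))

private lemma circ_upper10 (k d : ℕ) (hd : 1 ≤ d) (hdk : d ≤ k) :
    ∃ c : Fin k → AddCircle ((k:ℝ)/d),
      IsAcyclicColouring (fun i j : Fin k => d ≤ (((j:ℕ) + (k - (i:ℕ))) % k)) ((k:ℝ)/d) c := by
  classical
  have hk : 0 < k := lt_of_lt_of_le hd hdk
  have hdR : (0:ℝ) < d := by exact_mod_cast hd
  set p : ℝ := (k:ℝ)/d with hpdef
  refine ⟨fun i => (((i:ℕ):ℝ)/d : ℝ), ?_⟩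
  intro a
  set P : Fin k → Prop := fun i =>
    ∃ m : ℤ, ((d:ℝ)*a) < ((i:ℕ):ℝ) + m*k ∧ ((i:ℕ):ℝ) + m*k < (d:ℝ)*a+d with hP
  have key : ∀ i : Fin k, (((((i:ℕ):ℝ)/d : ℝ) : AddCircle p) ∈ unitArc p a) → P i := by
    intro i hi
    obtain ⟨r, hr, hre⟩ := hi
    rw [QuotientAddGroup.eq_iff_sub_mem, AddSubgroup.mem_zmultiples_iff] at hre
    obtain ⟨m, hm⟩ := hre
    rw [zsmul_eq_mul] at hm
    have hmain : ((i:ℕ):ℝ) + m*k = d * r := by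
      rw [hpdef] at hm
      field_simp at hm ⊢
      linarith
    refine ⟨m, ?_, ?_⟩
    · rw [hmain]; exact mul_lt_mul_of_pos_left hr.1 hdR
    · rw [hmain]
      have := mul_lt_mul_of_pos_left hr.2 hdR
      rw [mul_add, mul_one] at this
      linarith
  set φ : Fin k → ℤ := fun i =>
    if h : P i then ((i:ℕ):ℤ) + h.choose * k else 0 with hφ
  have φspec : ∀ i : Fin k, P i →
      ∃ m : ℤ, φ i = ((i:ℕ):ℤ) + m*k ∧
        ((d:ℝ)*a) < ((φ i : ℤ):ℝ) ∧ ((φ i : ℤ):ℝ) < (d:ℝ)*a+d := by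
    intro i h
    have he : φ i = ((i:ℕ):ℤ) + h.choose * k := dif_pos h
    obtain ⟨h1, h2⟩ := h.choose_spec
    refine ⟨h.choose, he, ?_, ?_⟩ <;> rw [he] <;> push_cast <;> [exact h1; exact h2]
  apply acyclicOn_of_potential10 _ _ φ
  intro u w hu hw huw
  obtain ⟨mu, hmu, hbu1, hbu2⟩ := φspec u (key u hu)
  obtain ⟨mw, hmw, hbw1, hbw2⟩ := φspec w (key w hw)
  by_contra hnot
  push_neg at hnot
  set D : ℤ := φ w - φ u with hD
  have hD0 : 0 ≤ D := by omega
  have hDd : D < d := by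
    have : ((φ w : ℤ):ℝ) - ((φ u : ℤ):ℝ) < d := by linarith
    exact_mod_cast this
  set t : ℕ := (((w:ℕ) + (k - (u:ℕ))) % k) with ht
  have hdt : d ≤ t := huw
  have htk : t < k := Nat.mod_lt _ hk
  -- D ≡ t mod k, both in [0, k)
  have hDmod : D % k = (((w:ℕ):ℤ) - ((u:ℕ):ℤ)) % k := by
    have : D = (((w:ℕ):ℤ) - ((u:ℕ):ℤ)) + k * (mw - mu) := by
      rw [hD, hmu, hmw]; ring
    rw [this, Int.add_mul_emod_self_left]
  have htmod : (t:ℤ) % k = (((w:ℕ):ℤ) - ((u:ℕ):ℤ)) % k := by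
    have h1 : ((w:ℕ) + (k - (u:ℕ)) : ℕ) = (w:ℕ) + k - (u:ℕ) := by
      have := u.isLt; omega
    have h2 : (t:ℤ) = (((w:ℕ) + k - (u:ℕ) : ℕ):ℤ) % k := by
      rw [ht, h1]; push_cast; ring_nf
    rw [h2]
    have h3 : (((w:ℕ) + k - (u:ℕ) : ℕ):ℤ) = (((w:ℕ):ℤ) - ((u:ℕ):ℤ)) + k * 1 := by
      have := u.isLt
      push_cast [Nat.cast_sub (by omega : (u:ℕ) ≤ (w:ℕ) + k)]
      ring
    rw [h3, Int.add_mul_emod_self_left, Int.emod_emod_of_dvd _ dvd_rfl]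
  have hDt : D = t := by
    have e1 : D % k = D := Int.emod_eq_of_lt hD0 (by exact_mod_cast lt_of_lt_of_le hDd (by exact_mod_cast hdk))
    have e2 : (t:ℤ) % k = t := Int.emod_eq_of_lt (by positivity) (by exact_mod_cast htk)
    omega
  omega



private lemma circ_card_bound10 (k d : ℕ) (hd : 1 ≤ d) (hdk : d < k) (p : ℝ)
    (c : Fin k → AddCircle p) (a : ℝ)
    (hA : AcyclicOn (fun i j : Fin k => d ≤ (((j:ℕ) + (k - (i:ℕ))) % k)) (c ⁻¹' unitArc p a))
    (s : Finset (Fin k)) (hs : ∀ v ∈ s, c v ∈ unitArc p a) : s.card ≤ d := by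
  classical
  by_contra hcard
  push_neg at hcard
  obtain ⟨t, hts, htc⟩ := Finset.exists_subset_card_eq (show d+1 ≤ s.card from hcard)
  set bb := t.orderIsoOfFin htc with hbb
  set b : ℕ → Fin k := fun i => (bb ⟨min i d, Nat.lt_succ_of_le (min_le_right _ _)⟩ : Fin k) with hb
  have hmono : ∀ i j, i < j → j ≤ d → b i < b j := by
    intro i j hij hjd
    have : (⟨min i d, Nat.lt_succ_of_le (min_le_right _ _)⟩ : Fin (d+1)) <
        ⟨min j d, Nat.lt_succ_of_le (min_le_right _ _)⟩ := by
      simp [Fin.lt_def]; omega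
    exact_mod_cast bb.strictMono this
  -- val gaps
  have hgap : ∀ j, j ≤ d → ∀ i, i ≤ j → (b i : ℕ) + (j - i) ≤ (b j : ℕ) := by
    intro j
    induction j with
    | zero =>
      intro _ i hi
      have : i = 0 := by omega
      subst this; simp
    | succ n ih =>
      intro hnd i hi
      rcases Nat.eq_or_lt_of_le hi with rfl | hlt
      · simp
      · have h1 := ih (by omega) i (by omega)
        have h2 := Fin.lt_def.mp (hmono n (n+1) (by omega) hnd)
        omega
  have hbd : (b d : ℕ) < k := (b d).isLt
  have hb0d : (b 0 : ℕ) + d ≤ (b d : ℕ) := by simpa using hgap d le_rfl 0 (by omega)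
  set E : Fin k → Fin k → Prop := fun i j => d ≤ (((j:ℕ) + (k - (i:ℕ))) % k) with hE
  -- arcs
  have harc1 : ∀ i < d, E (b (i+1)) (b i) := by
    intro i hi
    have h1 : (b i : ℕ) < (b (i+1) : ℕ) := hmono i (i+1) (by omega) (by omega)
    have h2 : (b (i+1) : ℕ) - (b i : ℕ) ≤ k - d := by
      have g1 := hgap i (by omega) 0 (by omega)
      have g2 := hgap d le_rfl (i+1) (by omega)
      omega
    have hlt : (b i : ℕ) + (k - (b (i+1) : ℕ)) < k := by
      have := (b (i+1)).isLt; omega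
    show d ≤ _
    rw [Nat.mod_eq_of_lt hlt]
    have := (b (i+1)).isLt
    omega
  have harc2 : E (b 0) (b d) := by
    have hlt : (b d : ℕ) + (k - (b 0 : ℕ)) = ((b d : ℕ) - (b 0 : ℕ)) + k := by
      have := (b 0).isLt; omega
    show d ≤ _
    rw [hlt, Nat.add_mod_right, Nat.mod_eq_of_lt (by omega)]
    omega
  -- the dicycle
  have hmem : ∀ i ≤ d, b i ∈ t := by intro i _; exact (bb _).2
  have hnodup : (b d :: (List.range d).reverse.map b).Nodup := by
    have : (b d :: (List.range d).reverse.map b) = ((List.range (d+1)).reverse.map b) := by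
      rw [List.range_succ, List.reverse_append]; simp
    rw [this]
    apply List.Nodup.map_on
    · intro x hx y hy hxy
      simp at hx hy
      by_contra hne
      rcases Nat.lt_or_ge x y with h | h
      · exact absurd hxy (ne_of_lt (hmono x y h (by omega)))
      · have : y < x := by omega
        exact absurd hxy.symm (ne_of_lt (hmono y x this (by omega)))
    · simp [List.nodup_range]
  have hcyc : IsDicycle E (b d) ((List.range d).reverse.map b) :=
    ⟨hnodup, chainDesc10 E b (b d) d harc1 harc2⟩
  apply hA (b d) ((List.range d).reverse.map b) hcyc
  intro x hx
  simp at hx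
  rcases hx with rfl | ⟨i, hi, rfl⟩
  · exact hs _ (hts (hmem d le_rfl))
  · exact hs _ (hts (hmem i (by omega)))


private lemma circ_lower10 (k d : ℕ) (hd : 1 ≤ d) (hdk : d < k) (p : ℝ) (hp1 : 1 ≤ p)
    (c : Fin k → AddCircle p)
    (hc : IsAcyclicColouring (fun i j : Fin k => d ≤ (((j:ℕ) + (k - (i:ℕ))) % k)) p c) :
    (k:ℝ)/d ≤ p := by
  classical
  have hk : 0 < k := lt_trans hd hdk
  have hp0 : (0:ℝ) < p := by linarith
  have hdR : (0:ℝ) < d := by exact_mod_cast hd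
  -- representatives
  have hrep : ∀ v : Fin k, ∃ r : ℝ, (0 ≤ r ∧ r < p) ∧ (↑r : AddCircle p) = c v := by
    intro v
    induction (c v) using QuotientAddGroup.induction_on with
    | H b =>
      refine ⟨toIcoMod hp0 0 b, by simpa using toIcoMod_mem_Ico hp0 0 b, ?_⟩
      rw [QuotientAddGroup.eq_iff_sub_mem, toIcoMod_sub_self]
      apply AddSubgroup.zsmul_mem_zmultiples
  choose x hx1 hx2 using hrep
  set σ := Tuple.sort x with hσ
  have hymono : Monotone (x ∘ σ) := Tuple.monotone_sort x
  set Y : ℕ → ℝ := fun t => x (σ ⟨t % k, Nat.mod_lt _ hk⟩) with hY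
  have hYmono : ∀ s t, s ≤ t → t < k → Y s ≤ Y t := by
    intro s t hst htk
    have hs : s % k = s := Nat.mod_eq_of_lt (by omega)
    have ht : t % k = t := Nat.mod_eq_of_lt htk
    exact hymono (show (⟨s % k, _⟩ : Fin k) ≤ ⟨t % k, _⟩ by simp [hs, ht, Fin.le_def, hst])
  have hY0 : ∀ t, 0 ≤ Y t := fun t => (hx1 _).1
  have hYp : ∀ t, Y t < p := fun t => (hx1 _).2
  set z : ℕ → ℝ := fun t => if t < k then Y t else Y (t - k) + p with hz
  have hzlt : ∀ t, t < k → z t = Y t := by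
    intro t ht; simp only [hz]; rw [if_pos ht]
  have hzge : ∀ t, k ≤ t → z t = Y (t - k) + p := by
    intro t ht; simp only [hz]; rw [if_neg (by omega)]
  have hzmono : ∀ s t, s ≤ t → t < k + k → z s ≤ z t := by
    intro s t hst htk
    rcases Nat.lt_or_ge s k with hs | hs <;> rcases Nat.lt_or_ge t k with ht | ht
    · rw [hzlt s hs, hzlt t ht]; exact hYmono s t hst ht
    · rw [hzlt s hs, hzge t ht]
      have := hYp s; have := hY0 (t - k); linarith
    · omega
    · rw [hzge s hs, hzge t ht]
      have := hYmono (s - k) (t - k) (by omega) (by omega); linarith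
  -- z j has colour of vertex σ ⟨j % k⟩
  have hcoe : ∀ j, k ≤ j → j < k + k → ((z j : ℝ) : AddCircle p) = ((Y (j % k) : ℝ) : AddCircle p) := by
    intro j h1 h2
    have e1 : j % k = j - k := by
      rw [Nat.mod_eq_sub_mod h1, Nat.mod_eq_of_lt (by omega)]

    rw [hzge j h1, e1]
    rw [QuotientAddGroup.eq_iff_sub_mem, AddSubgroup.mem_zmultiples_iff]
    exact ⟨1, by simp⟩
  have hcoe' : ∀ j, j < k + k → ((z j : ℝ) : AddCircle p) = c (σ ⟨j % k, Nat.mod_lt _ hk⟩) := by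
    intro j hj
    have hYe : Y (j % k) = x (σ ⟨j % k, Nat.mod_lt _ hk⟩) := by
      simp only [hY]
      congr 2
      exact Fin.ext (Nat.mod_eq_of_lt (Nat.mod_lt _ hk))
    rcases Nat.lt_or_ge j k with h | h
    · rw [hzlt j h]
      have : Y j = Y (j % k) := by
        simp only [hY]
        congr 2
        exact Fin.ext (Nat.mod_eq_of_lt (Nat.mod_lt _ hk)).symm
      rw [this, hYe]; exact hx2 _
    · rw [hcoe j h hj, hYe]; exact hx2 _
  -- the chord inequality
  have chord : ∀ i, i < k → 1 ≤ z (i + d) - z i := by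
    intro i hik
    by_contra hcon
    push_neg at hcon
    set ε : ℝ := (1 - (z (i+d) - z i))/2 with hε
    have hε0 : 0 < ε := by
      have := hzmono i (i+d) (by omega) (by omega)
      simp [hε]; linarith
    set a : ℝ := z i - ε with ha
    set s : Finset (Fin k) :=
      (Finset.Ico i (i+d+1)).image (fun j => σ ⟨j % k, Nat.mod_lt _ hk⟩) with hsdef
    have hmem : ∀ v ∈ s, c v ∈ unitArc p a := by
      intro v hv
      simp only [hsdef, Finset.mem_image, Finset.mem_Ico] at hv
      obtain ⟨j, hj, rfl⟩ := hv
      refine ⟨z j, ⟨?_, ?_⟩, hcoe' j (by omega)⟩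
      · have := hzmono i j (by omega) (by omega); simp [ha]; linarith
      · have := hzmono j (i+d) (by omega) (by omega); simp [ha]; linarith
    have hcard : s.card = d + 1 := by
      rw [hsdef, Finset.card_image_of_injOn, Nat.card_Ico]
      · omega
      · intro j1 h1 j2 h2 he
        simp only [Finset.coe_Ico, Set.mem_Ico] at h1 h2
        have := σ.injective he
        have hmod : ∀ j : ℕ, j < k + k → (j % k = j ∨ (k ≤ j ∧ j % k + k = j)) := by
          intro j hj
          rcases Nat.lt_or_ge j k with h | h
          · exact Or.inl (Nat.mod_eq_of_lt h)
          · refine Or.inr ⟨h, ?_⟩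
            rw [Nat.mod_eq_sub_mod h, Nat.mod_eq_of_lt (by omega)]
            omega
        have e : j1 % k = j2 % k := by
          have := Fin.mk.inj_iff.mp this; exact this
        have m1 := hmod j1 (by omega)
        have m2 := hmod j2 (by omega)
        omega
    have := circ_card_bound10 k d hd hdk p c a (hc a) s hmem
    omega
  -- sum up
  have hsum1 : (k:ℝ) ≤ ∑ i ∈ Finset.range k, (z (i+d) - z i) := by
    have : ∀ i ∈ Finset.range k, (1:ℝ) ≤ z (i+d) - z i := by
      intro i hi; exact chord i (Finset.mem_range.mp hi)
    calc (k:ℝ) = ∑ _i ∈ Finset.range k, (1:ℝ) := by simp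
    _ ≤ _ := Finset.sum_le_sum this
  have hsum2 : ∑ i ∈ Finset.range k, (z (i+d) - z i) = d * p := by
    rw [Finset.sum_sub_distrib]
    have e1 : ∑ i ∈ Finset.range k, z (i+d) = ∑ j ∈ Finset.Ico d (d+k), z j := by
      rw [Finset.sum_Ico_eq_sum_range]
      simp only [Nat.add_sub_cancel_left]
      exact Finset.sum_congr rfl (fun i _ => by rw [Nat.add_comm])
    have e2 : ∑ i ∈ Finset.range k, z i = ∑ j ∈ Finset.Ico 0 k, z j := by
      rw [Finset.range_eq_Ico]
    have e3 : ∑ j ∈ Finset.Ico d (d+k), z j + ∑ j ∈ Finset.Ico 0 d, z j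
        = ∑ j ∈ Finset.Ico 0 k, z j + ∑ j ∈ Finset.Ico k (d+k), z j := by
      have c1 := Finset.sum_Ico_consecutive z (by omega : (0:ℕ) ≤ d) (by omega : d ≤ d+k)
      have c2 := Finset.sum_Ico_consecutive z (by omega : (0:ℕ) ≤ k) (by omega : k ≤ d+k)
      linarith
    have e4 : ∑ j ∈ Finset.Ico k (d+k), z j = ∑ j ∈ Finset.Ico 0 d, z j + d * p := by
      rw [Finset.sum_Ico_eq_sum_range, Finset.sum_Ico_eq_sum_range]
      simp only [Nat.add_sub_cancel, Nat.sub_zero, Nat.zero_add]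
      have heq : ∀ i ∈ Finset.range d, z (k + i) = z i + p := by
        intro i hi
        have hik : i < d := Finset.mem_range.mp hi
        rw [hzge (k+i) (by omega), hzlt i (by omega)]
        have : k + i - k = i := by omega
        rw [this]
      rw [Finset.sum_congr rfl heq, Finset.sum_add_distrib, Finset.sum_const, Finset.card_range,
        nsmul_eq_mul]
    rw [e1, e2]
    linarith [e3, e4]
  rw [div_le_iff₀ hdR]
  calc (k:ℝ) ≤ _ := hsum1
  _ = d * p := hsum2
  _ = p * d := by ring


private lemma star_circulant10 (k d : ℕ) (hd : 1 ≤ d) (hdk : d ≤ k) :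
    starDichromatic (fun i j : Fin k => d ≤ (((j:ℕ) + (k - (i:ℕ))) % k)) = (k:ℝ)/d := by
  have hdR : (0:ℝ) < d := by exact_mod_cast hd
  have h1 : 1 ≤ (k:ℝ)/d := by
    rw [le_div_iff₀ hdR]
    have : (d:ℝ) ≤ (k:ℝ) := by exact_mod_cast hdk
    linarith
  obtain ⟨c, hc⟩ := circ_upper10 k d hd hdk
  have hmem : (k:ℝ)/d ∈ {p : ℝ | 1 ≤ p ∧
      ∃ c : Fin k → AddCircle p,
        IsAcyclicColouring (fun i j : Fin k => d ≤ (((j:ℕ) + (k - (i:ℕ))) % k)) p c} :=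
    ⟨h1, c, hc⟩
  have hlb : ∀ p ∈ {p : ℝ | 1 ≤ p ∧
      ∃ c : Fin k → AddCircle p,
        IsAcyclicColouring (fun i j : Fin k => d ≤ (((j:ℕ) + (k - (i:ℕ))) % k)) p c},
      (k:ℝ)/d ≤ p := by
    rintro p ⟨hp1, c', hc'⟩
    rcases Nat.lt_or_ge d k with h | h
    · exact circ_lower10 k d hd h p hp1 c' hc'
    · have : (k:ℝ)/d ≤ 1 := by
        rw [div_le_one hdR]
        exact_mod_cast h
      linarith
  exact le_antisymm (csInf_le ⟨_, hlb⟩ hmem) (le_csInf ⟨_, hmem⟩ hlb)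

/-- STATEMENT 10 proof -/
theorem stmt10 (q : ℚ) (hq : 1 ≤ q) :
    ∃ (n : ℕ) (E : Fin n → Fin n → Prop), 0 < n ∧ (∀ v, ¬ E v v) ∧
      starDichromatic E = (q : ℝ) := by
  set d : ℕ := q.den with hddef
  set k : ℕ := q.num.toNat with hkdef
  have hd : 1 ≤ d := q.pos
  have hdR : (0:ℝ) < (d:ℝ) := by exact_mod_cast hd
  have hq1 : (1:ℝ) ≤ (q:ℝ) := by exact_mod_cast hq
  have hqcast : (q:ℝ) = (q.num:ℝ) / (q.den:ℝ) := by
    rw [Rat.cast_def]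
  have hnumR : (q.den:ℝ) ≤ (q.num:ℝ) := by
    rw [hqcast, le_div_iff₀ hdR, one_mul] at hq1
    exact hq1
  have hnum : (q.den:ℤ) ≤ q.num := by exact_mod_cast hnumR
  have hknum : (k:ℤ) = q.num := Int.toNat_of_nonneg (by omega)
  have hdk : d ≤ k := by omega
  refine ⟨k, fun i j => d ≤ (((j:ℕ) + (k - (i:ℕ))) % k), by omega, ?_, ?_⟩
  · intro v hv
    have hvk := v.isLt
    have : ((v:ℕ) + (k - (v:ℕ))) % k = 0 := by
      rw [show (v:ℕ) + (k - (v:ℕ)) = k by omega, Nat.mod_self]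
    rw [this] at hv
    omega
  · rw [star_circulant10 k d hd hdk, hqcast]
    congr 1
    · exact_mod_cast hknum
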